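/- arXiv:1909.00710 — 6 statements merged into one kernel-verified Lean document; each statement's English description precedes it below -/
import Mathlib

section
/- Let X ⊆ ℝⁿ be a convex set and let f₁,…,f_m : ℝⁿ → ℝ be convex functions. If x* ∈ X is a weak Pareto minimizer of f = (f₁,…,f_m) on X, then there exist nonnegative real numbers τ₁,…,τ_m, not all zero, such that x* minimizes the weighted sum τ₁f₁(x) + … + τ_m f_m(x) over all x ∈ X. -/
private lemma combo_lt {a b u v u' v' : ℝ} (ha : 0 ≤ a) (hb : 0 ≤ b) (hab : a + b = 1)
    (h : u < v) (h' : u' < v') : a * u + b * u' < a * v + b * v' := by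
  rcases eq_or_lt_of_le ha with rfl | ha'
  · simp only [zero_mul, zero_add]
    have hb1 : b = 1 := by linarith
    simpa [hb1] using h'
  · have h1 : a * u < a * v := by exact (mul_lt_mul_iff_right₀ ha').mpr h
    have h2 : b * u' ≤ b * v' := by nlinarith
    linarith

private lemma eucl_sum_single {m : ℕ} (y : EuclideanSpace ℝ (Fin m)) :
    ∑ i, y i • EuclideanSpace.single i (1 : ℝ) = y := by
  ext j
  classical
  rw [WithLp.ofLp_sum, Finset.sum_apply]
  simp [EuclideanSpace.single_apply, PiLp.smul_apply, Finset.sum_ite_eq, mul_comm]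

/-- For convex data, every weak Pareto minimizer of `f = (f₁, …, f_m)` on a
convex set `X` minimizes some nonnegative, not-all-zero weighted sum of the objectives over `X`. -/
theorem weak_pareto_is_weighted_sum_min {n m : ℕ}
    (X : Set (EuclideanSpace ℝ (Fin n))) (hX : Convex ℝ X)
    (f : Fin m → EuclideanSpace ℝ (Fin n) → ℝ)
    (hf : ∀ i, ConvexOn ℝ Set.univ (f i))
    (xstar : EuclideanSpace ℝ (Fin n)) (hxstar : xstar ∈ X)
    (hweak : ¬ ∃ x ∈ X, ∀ i, f i x < f i xstar) :
    ∃ τ : Fin m → ℝ, (∀ i, 0 ≤ τ i) ∧ τ ≠ 0 ∧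
      ∀ x ∈ X, ∑ i, τ i * f i xstar ≤ ∑ i, τ i * f i x := by
  rcases Nat.eq_zero_or_pos m with rfl | hm
  · exact absurd ⟨xstar, hxstar, fun i => i.elim0⟩ hweak
  -- the set of strict upper displacements
  set A : Set (EuclideanSpace ℝ (Fin m)) :=
    {y | ∃ x ∈ X, ∀ i, f i x - f i xstar < y i} with hA
  have hAconv : Convex ℝ A := by
    rintro y₁ ⟨x₁, hx₁, hy₁⟩ y₂ ⟨x₂, hx₂, hy₂⟩ a b ha hb hab
    refine ⟨a • x₁ + b • x₂, hX hx₁ hx₂ ha hb hab, fun i => ?_⟩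
    have hcomb := (hf i).2 (Set.mem_univ x₁) (Set.mem_univ x₂) ha hb hab
    have hlt : a * (f i x₁ - f i xstar) + b * (f i x₂ - f i xstar)
        < a * y₁ i + b * y₂ i := combo_lt ha hb hab (hy₁ i) (hy₂ i)
    have : (a • y₁ + b • y₂) i = a * y₁ i + b * y₂ i := rfl
    rw [this]
    have h1 : f i xstar = a * f i xstar + b * f i xstar := by rw [← add_mul, hab, one_mul]
    simp only [smul_eq_mul] at hcomb
    nlinarith
  have hAopen : IsOpen A := by
    have : A = ⋃ x ∈ X, ⋂ i, {y : EuclideanSpace ℝ (Fin m) | f i x - f i xstar < y i} := by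
      ext y
      simp [hA, Set.mem_iUnion, Set.mem_iInter]
    rw [this]
    refine isOpen_biUnion fun x _ => isOpen_iInter_of_finite fun i => ?_
    exact isOpen_lt continuous_const (PiLp.continuous_apply 2 _ i)
  have h0A : (0 : EuclideanSpace ℝ (Fin m)) ∉ A := by
    rintro ⟨x, hx, hy⟩
    exact hweak ⟨x, hx, fun i => by have := hy i; simpa using this⟩
  obtain ⟨φ, hφ⟩ := geometric_hahn_banach_point_open hAconv hAopen h0A
  simp only [map_zero] at hφ
  -- positive orthant is in A
  have hpos : ∀ y : EuclideanSpace ℝ (Fin m), (∀ i, 0 < y i) → 0 < φ y := by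
    intro y hy
    exact hφ y ⟨xstar, hxstar, fun i => by simpa using hy i⟩
  set τ : Fin m → ℝ := fun i => φ (EuclideanSpace.single i 1) with hτ
  have hφeq : ∀ y : EuclideanSpace ℝ (Fin m), φ y = ∑ i, y i * τ i := by
    intro y
    conv_lhs => rw [← eucl_sum_single y]
    rw [map_sum]
    simp [hτ, smul_eq_mul]
  -- ones vector
  set ones : EuclideanSpace ℝ (Fin m) := WithLp.toLp 2 (fun _ => 1) with hones
  have hones_pos : 0 < φ ones := hpos ones (fun i => one_pos)
  have hτnn : ∀ i, 0 ≤ τ i := by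
    intro i
    by_contra hneg
    push_neg at hneg
    set t : ℝ := (φ ones + 1) / (-τ i) with ht
    have htpos : 0 < t := div_pos (by linarith) (by linarith)
    have key : 0 < φ (t • EuclideanSpace.single i 1 + ones) := by
      refine hpos _ fun j => ?_
      have : (t • EuclideanSpace.single i (1:ℝ) + ones) j
          = t * (EuclideanSpace.single i (1:ℝ)) j + 1 := rfl
      rw [this, EuclideanSpace.single_apply]
      by_cases hij : j = i <;> simp [hij] <;> positivity
    rw [map_add, map_smul, smul_eq_mul] at key
    have hne : τ i ≠ 0 := ne_of_lt hneg
    have : t * τ i = -(φ ones + 1) := by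
      rw [ht]; field_simp
    rw [hτ] at this
    rw [this] at key
    linarith
  have hτne : τ ≠ 0 := by
    intro h0
    have : φ ones = 0 := by
      rw [hφeq]
      simp [h0]
    linarith
  refine ⟨τ, hτnn, hτne, fun x hx => ?_⟩
  -- for each ε > 0, the shifted vector is in A
  have key : ∀ ε : ℝ, 0 < ε →
      0 < ∑ i, (f i x - f i xstar + ε) * τ i := by
    intro ε hε
    have hmem : (WithLp.toLp 2 (fun i => f i x - f i xstar + ε) : EuclideanSpace ℝ (Fin m)) ∈ A :=
      ⟨x, hx, fun i => by simp [hε]⟩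
    have := hφ _ hmem
    rwa [hφeq] at this
  set T : ℝ := ∑ i, τ i with hT
  have hTnn : 0 ≤ T := Finset.sum_nonneg fun i _ => hτnn i
  have hS : 0 ≤ ∑ i, (f i x - f i xstar) * τ i := by
    by_contra hneg
    push_neg at hneg
    set S : ℝ := ∑ i, (f i x - f i xstar) * τ i with hSdef
    have hε : (0:ℝ) < -S / (T + 1) := div_pos (by linarith) (by linarith)
    have := key _ hε
    have hexpand : ∑ i, (f i x - f i xstar + (-S / (T+1))) * τ i
        = S + (-S / (T+1)) * T := by
      rw [hSdef, hT, Finset.mul_sum, ← Finset.sum_add_distrib]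
      congr 1; ext i; ring
    rw [hexpand] at this
    have hfrac : (-S / (T+1)) * T < -S := by
      rw [div_mul_eq_mul_div, div_lt_iff₀ (by linarith : (0:ℝ) < T + 1)]
      nlinarith
    linarith
  have : ∑ i, (f i x - f i xstar) * τ i = ∑ i, τ i * f i x - ∑ i, τ i * f i xstar := by
    rw [← Finset.sum_sub_distrib]; congr 1; ext i; ring
  linarith
end

section
/- Let X ⊆ ℝⁿ be a closed convex set and let f₁,…,f_m : ℝⁿ → ℝ be convex differentiable functions. Then x* ∈ X is a weak Pareto minimizer of f = (f₁,…,f_m) on X if and only if there exist nonnegative real numbers τ₁,…,τ_m, not all zero, such that −(τ₁∇f₁(x*) + … + τ_m∇f_m(x*)) belongs to the normal cone N_X(x*). -/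
open RealInnerProductSpace

open Set Filter Topology

section Aux

lemma inner_grad_eq {n : ℕ} (f : EuclideanSpace ℝ (Fin n) → ℝ) (x d : EuclideanSpace ℝ (Fin n))
    (hd : DifferentiableAt ℝ f x) : ⟪gradient f x, d⟫ = fderiv ℝ f x d := by
  have h := hd.hasGradientAt
  rw [hasGradientAt_iff_hasFDerivAt] at h
  rw [h.fderiv]
  exact InnerProductSpace.toDual_apply_apply (𝕜 := ℝ) (E := EuclideanSpace ℝ (Fin n))

lemma line_hasDerivAt {n : ℕ} (f : EuclideanSpace ℝ (Fin n) → ℝ)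
    (hdiff : Differentiable ℝ f) (x d : EuclideanSpace ℝ (Fin n)) :
    HasDerivAt (fun t : ℝ => f (x + t • d)) ⟪gradient f x, d⟫ 0 := by
  have hline : HasDerivAt (fun t : ℝ => x + t • d) d 0 := by
    simpa using ((hasDerivAt_id (0:ℝ)).smul_const d).const_add x
  have h := (hdiff (x + (0:ℝ) • d)).hasFDerivAt.comp_hasDerivAt 0 hline
  simp only [zero_smul, add_zero] at h
  rw [inner_grad_eq f x d (hdiff x)]
  exact h

lemma grad_ineq {n : ℕ} (f : EuclideanSpace ℝ (Fin n) → ℝ)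
    (hconv : ConvexOn ℝ univ f) (hdiff : Differentiable ℝ f)
    (x y : EuclideanSpace ℝ (Fin n)) :
    ⟪gradient f x, y - x⟫ ≤ f y - f x := by
  set g : ℝ → ℝ := fun t => f (x + t • (y - x)) with hg
  have hgconv : ConvexOn ℝ univ g := by
    have := hconv.comp_affineMap (AffineMap.lineMap x y)
    have heq : (f ∘ (AffineMap.lineMap x y : ℝ →ᵃ[ℝ] _)) = g := by
      funext t
      simp [g, AffineMap.lineMap_apply, add_comm]
    rw [heq] at this
    simpa using this
  have hder := line_hasDerivAt f hdiff x (y - x)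
  have := hgconv.le_slope_of_hasDerivAt (mem_univ 0) (mem_univ 1) zero_lt_one hder
  rw [slope_def_field] at this
  simpa [g] using this

lemma sep_lemma {n m : ℕ} (X : Set (EuclideanSpace ℝ (Fin n))) (hX : Convex ℝ X)
    (v : Fin m → EuclideanSpace ℝ (Fin n))
    (xstar : EuclideanSpace ℝ (Fin n)) (hxstar : xstar ∈ X)
    (h : ¬ ∃ x ∈ X, ∀ i, ⟪v i, x - xstar⟫ < 0) :
    ∃ τ : Fin m → ℝ, (∀ i, 0 ≤ τ i) ∧ τ ≠ 0 ∧
      ∀ x ∈ X, 0 ≤ ∑ i, τ i * ⟪v i, x - xstar⟫ := by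
  classical
  set E := EuclideanSpace ℝ (Fin m)
  set s : Set E := {y | ∀ i, y i < 0} with hs_def
  set K : Set E := {y | ∃ x ∈ X, ∀ i, ⟪v i, x - xstar⟫ ≤ y i} with hK_def
  have hs_open : IsOpen s := by
    have : s = ⋂ i, {y : E | y i < 0} := by ext y; simp [hs_def]
    rw [this]
    exact isOpen_iInter_of_finite fun i =>
      isOpen_Iio.preimage (EuclideanSpace.proj i).continuous
  have hs_conv : Convex ℝ s := by
    have : s = ⋂ i, {y : E | y i < 0} := by ext y; simp [hs_def]
    rw [this]
    refine convex_iInter fun i => ?_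
    exact convex_halfSpace_lt (IsLinearMap.mk (fun a b => rfl) (fun c a => rfl)) 0
  have hK_conv : Convex ℝ K := by
    rintro y ⟨x, hx, hxy⟩ y' ⟨x', hx', hxy'⟩ a b ha hb hab
    refine ⟨a • x + b • x', hX hx hx' ha hb hab, fun i => ?_⟩
    have : a • x + b • x' - xstar = a • (x - xstar) + b • (x' - xstar) := by
      have hx0 : xstar = a • xstar + b • xstar := by rw [← add_smul, hab, one_smul]
      calc a • x + b • x' - xstar = a • x + b • x' - (a • xstar + b • xstar) := by
            rw [← hx0]
        _ = a • (x - xstar) + b • (x' - xstar) := by rw [smul_sub, smul_sub]; abel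
    rw [this, inner_add_right, real_inner_smul_right, real_inner_smul_right]
    have h1 : a * ⟪v i, x - xstar⟫ ≤ a * y i := mul_le_mul_of_nonneg_left (hxy i) ha
    have h2 : b * ⟪v i, x' - xstar⟫ ≤ b * y' i := mul_le_mul_of_nonneg_left (hxy' i) hb
    calc a * ⟪v i, x - xstar⟫ + b * ⟪v i, x' - xstar⟫ ≤ a * y i + b * y' i := add_le_add h1 h2
      _ = (a • y + b • y') i := rfl
  have hdisj : Disjoint s K := by
    rw [Set.disjoint_left]
    rintro y hy ⟨x, hx, hxy⟩
    exact h ⟨x, hx, fun i => lt_of_le_of_lt (hxy i) (hy i)⟩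
  obtain ⟨φ, u, hφs, hφK⟩ := geometric_hahn_banach_open hs_conv hs_open hK_conv hdisj
  -- w : the Riesz vector of φ
  set w : E := (InnerProductSpace.toDual ℝ E).symm φ with hw
  have hφ_eq : ∀ y : E, φ y = ⟪w, y⟫ := fun y =>
    (InnerProductSpace.toDual_symm_apply (𝕜 := ℝ) (E := E)).symm
  have h0K : (0 : E) ∈ K := ⟨xstar, hxstar, fun i => by
    have : (0 : E) i = 0 := rfl
    rw [this]; simp⟩
  have hu0 : u ≤ 0 := by simpa using hφK 0 h0K
  set one : E := WithLp.toLp 2 (fun _ => (1:ℝ)) with hone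
  -- for y ≤ 0 componentwise, φ y ≤ u
  have hkey : ∀ y : E, (∀ i, y i ≤ 0) → φ y ≤ u := by
    intro y hy
    have hev : ∀ᶠ ε in 𝓝[>] (0:ℝ), φ (y - ε • one) ≤ u := by
      filter_upwards [self_mem_nhdsWithin] with ε hε
      refine le_of_lt (hφs _ fun i => ?_)
      have heq : (y - ε • one) i = y i - ε * 1 := rfl
      rw [heq]
      have : (0:ℝ) < ε := hε
      nlinarith [hy i]
    have hcont : Tendsto (fun ε : ℝ => φ (y - ε • one)) (𝓝[>] 0) (𝓝 (φ y)) := by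
      have hc : Continuous fun ε : ℝ => φ (y - ε • one) :=
        φ.continuous.comp (by fun_prop)
      have := hc.tendsto 0
      simp only [zero_smul, sub_zero] at this
      exact this.mono_left nhdsWithin_le_nhds
    exact le_of_tendsto hcont hev
  refine ⟨fun i => w i, ?_, ?_, ?_⟩
  · -- nonnegativity
    intro i
    by_contra hneg
    push_neg at hneg
    set t : ℝ := (|u| + 1) / (-(w i)) with ht
    have htpos : 0 < t := div_pos (by positivity) (by linarith)
    have h1 : φ ((-t) • EuclideanSpace.single i (1:ℝ)) ≤ u := by
      apply hkey
      intro j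
      by_cases hij : j = i
      · subst hij
        simp [PiLp.smul_apply, EuclideanSpace.single_apply, smul_eq_mul]
        linarith
      · simp [PiLp.smul_apply, EuclideanSpace.single_apply, hij, smul_eq_mul]
    rw [hφ_eq, real_inner_smul_right, EuclideanSpace.inner_single_right] at h1
    simp only [map_one, one_mul, starRingEnd_apply, star_trivial] at h1
    have hwne : -(w i) ≠ 0 := by linarith
    have heq : -t * w i = |u| + 1 := by
      have : -t * w i = t * (-(w i)) := by ring
      rw [this, ht, div_mul_cancel₀ _ hwne]
    rw [heq] at h1
    have : u ≤ |u| := le_abs_self u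
    linarith
  · -- τ ≠ 0
    intro hτ
    have hwzero : w = 0 := by
      ext i
      exact congrFun hτ i
    have h1 : φ (-one) < u := by
      apply hφs
      intro i
      have : (-one) i = -1 := rfl
      rw [this]; norm_num
    rw [hφ_eq, hwzero] at h1
    simp at h1
    linarith
  · -- positivity on X
    intro x hx
    have hyK : (WithLp.toLp 2 (fun i => ⟪v i, x - xstar⟫) : E) ∈ K := ⟨x, hx, fun i => le_refl _⟩
    have := hφK _ hyK
    rw [hφ_eq] at this
    have hinner : ⟪w, (WithLp.toLp 2 (fun i => ⟪v i, x - xstar⟫) : E)⟫ = ∑ i, w i * ⟪v i, x - xstar⟫ := by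
      rw [PiLp.inner_apply]
      simp [RCLike.inner_apply, conj_trivial, mul_comm]
    rw [hinner] at this
    have hge : (0:ℝ) ≤ u := by
      have h0 := hkey 0 (fun i => le_of_eq (rfl : (0:E) i = 0))
      simpa using h0
    show 0 ≤ ∑ i, w i * ⟪v i, x - xstar⟫
    linarith


end Aux

/-- For a closed convex set `X` and convex differentiable objectives,
`x* ∈ X` is a weak Pareto minimizer of `f = (f₁, …, f_m)` on `X` iff there are nonnegative
weights `τ`, not all zero, with `-(∑ i, τ i • ∇fᵢ(x*))` in the normal cone `N_X(x*)`. -/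
theorem weak_pareto_iff_normal_cone {n m : ℕ}
    (X : Set (EuclideanSpace ℝ (Fin n))) (hXc : IsClosed X) (hX : Convex ℝ X)
    (f : Fin m → EuclideanSpace ℝ (Fin n) → ℝ)
    (hfconv : ∀ i, ConvexOn ℝ Set.univ (f i))
    (hfdiff : ∀ i, Differentiable ℝ (f i))
    (xstar : EuclideanSpace ℝ (Fin n)) (hxstar : xstar ∈ X) :
    (¬ ∃ x ∈ X, ∀ i, f i x < f i xstar) ↔
      ∃ τ : Fin m → ℝ, (∀ i, 0 ≤ τ i) ∧ τ ≠ 0 ∧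
        (-(∑ i, τ i • gradient (f i) xstar)) ∈
          {v : EuclideanSpace ℝ (Fin n) | ∀ x ∈ X, ⟪v, x - xstar⟫ ≤ 0} := by
  constructor
  · intro hnp
    rcases Nat.eq_zero_or_pos m with hm | hm
    · exact absurd ⟨xstar, hxstar, fun i => absurd i.isLt (by omega)⟩ hnp
    have hlin : ¬ ∃ x ∈ X, ∀ i, ⟪gradient (f i) xstar, x - xstar⟫ < 0 := by
      rintro ⟨x, hxX, hx⟩
      have hev : ∀ i : Fin m, ∀ᶠ t in 𝓝[>] (0:ℝ),
          f i (xstar + t • (x - xstar)) < f i xstar := by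
        intro i
        have hder := line_hasDerivAt (f i) (hfdiff i) xstar (x - xstar)
        have hslope := hasDerivAt_iff_tendsto_slope.mp hder
        have h1 := hslope.eventually_lt_const (hx i)
        have h2 : ∀ᶠ t in 𝓝[>] (0:ℝ),
            slope (fun t => f i (xstar + t • (x - xstar))) 0 t < 0 :=
          h1.filter_mono (nhdsWithin_mono _ (fun t ht => ne_of_gt ht))
        filter_upwards [h2, self_mem_nhdsWithin] with t hts ht
        rw [slope_def_field] at hts
        have htpos : (0:ℝ) < t := ht
        have hnum : f i (xstar + t • (x - xstar)) - f i (xstar + (0:ℝ) • (x - xstar)) < 0 := by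
          rcases div_neg_iff.mp hts with ⟨h1', h2'⟩ | ⟨h1', _⟩
          · linarith
          · exact h1'
        simpa using hnum
      have hev1 : ∀ᶠ t in 𝓝[>] (0:ℝ), t ∈ Ioo (0:ℝ) 1 :=
        Ioo_mem_nhdsGT_of_mem ⟨le_refl 0, zero_lt_one⟩
      obtain ⟨t, hts, htI⟩ := ((eventually_all.2 hev).and hev1).exists
      exact hnp ⟨xstar + t • (x - xstar),
        hX.add_smul_sub_mem hxstar hxX ⟨le_of_lt htI.1, le_of_lt htI.2⟩, hts⟩
    obtain ⟨τ, hτ0, hτne, hτ⟩ :=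
      sep_lemma X hX (fun i => gradient (f i) xstar) xstar hxstar hlin
    refine ⟨τ, hτ0, hτne, fun x hxX => ?_⟩
    have h0 := hτ x hxX
    have heq : ⟪-(∑ i, τ i • gradient (f i) xstar), x - xstar⟫
        = -∑ i, τ i * ⟪gradient (f i) xstar, x - xstar⟫ := by
      rw [inner_neg_left, sum_inner]
      congr 1
      exact Finset.sum_congr rfl fun i _ => real_inner_smul_left _ _ _
    rw [heq]
    linarith
  · rintro ⟨τ, hτ0, hτne, hmem⟩ ⟨x, hxX, hlt⟩
    have h1 := hmem x hxX
    have heq : ⟪-(∑ i, τ i • gradient (f i) xstar), x - xstar⟫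
        = -∑ i, τ i * ⟪gradient (f i) xstar, x - xstar⟫ := by
      rw [inner_neg_left, sum_inner]
      congr 1
      exact Finset.sum_congr rfl fun i _ => real_inner_smul_left _ _ _
    rw [heq] at h1
    have h2 : 0 ≤ ∑ i, τ i * ⟪gradient (f i) xstar, x - xstar⟫ := by linarith
    obtain ⟨j, hj⟩ : ∃ j, τ j ≠ 0 := by
      by_contra hc
      push_neg at hc
      exact hτne (funext hc)
    have hjpos : 0 < τ j := lt_of_le_of_ne (hτ0 j) (Ne.symm hj)
    have hterm : ∀ i, τ i * ⟪gradient (f i) xstar, x - xstar⟫ ≤ 0 := fun i =>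
      mul_nonpos_of_nonneg_of_nonpos (hτ0 i)
        (le_trans (grad_ineq (f i) (hfconv i) (hfdiff i) xstar x) (by linarith [hlt i]))
    have hstrict : τ j * ⟪gradient (f j) xstar, x - xstar⟫ < 0 :=
      mul_neg_of_pos_of_neg hjpos
        (lt_of_le_of_lt (grad_ineq (f j) (hfconv j) (hfdiff j) xstar x) (by linarith [hlt j]))
    have hsum : ∑ i, τ i * ⟪gradient (f i) xstar, x - xstar⟫ < 0 := by
      have := Finset.sum_lt_sum (fun i _ => hterm i) ⟨j, Finset.mem_univ j, hstrict⟩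
      simpa using this
    linarith
end

section
/- Let f₁,…,f_m : ℝⁿ → ℝ and g₁,…,g_k : ℝⁿ → ℝ be convex differentiable functions, let X = {x ∈ ℝⁿ : g_j(x) ≤ 0 for all j = 1,…,k}, and suppose the Slater condition holds, i.e., there exists x̂ ∈ ℝⁿ with g_j(x̂) < 0 for all j. If x* ∈ X is a weak Pareto minimizer of f = (f₁,…,f_m) on X, then there exist nonnegative real numbers τ₁,…,τ_m, not all zero, and nonnegative real numbers λ₁,…,λ_k such that τ₁∇f₁(x*) + … + τ_m∇f_m(x*) + λ₁∇g₁(x*) + … + λ_k∇g_k(x*) = 0 and λ_j g_j(x*) = 0 for all j = 1,…,k. -/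
private lemma sum_single_smul_aux {ι : Type*} [Fintype ι] [DecidableEq ι] (w : ι → ℝ) :
    ∑ i, w i • (Pi.single i 1 : ι → ℝ) = w := by
  have h : ∑ i, w i • (Pi.single i 1 : ι → ℝ) = ∑ i, Pi.single i (w i) :=
    Finset.sum_congr rfl fun i _ => by rw [← Pi.single_smul, smul_eq_mul, mul_one]
  rw [h, Finset.univ_sum_single]

private lemma combo_lt_aux {a b u u' v v' : ℝ} (ha : 0 ≤ a) (hb : 0 ≤ b) (hab : a + b = 1)
    (h1 : u < u') (h2 : v < v') : a * u + b * v < a * u' + b * v' := by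
  rcases ha.eq_or_lt with rfl | ha'
  · have hb1 : b = 1 := by linarith
    simp [hb1, h2]
  · have h3 : a * u < a * u' := mul_lt_mul_of_pos_left h1 ha'
    have h4 : b * v ≤ b * v' := mul_le_mul_of_nonneg_left h2.le hb
    linarith

/-- KKT necessary conditions for a weak Pareto minimizer under the Slater
condition: there exist nonnegative multipliers `τ` (not all zero) and `λ` with
`∑ τᵢ ∇fᵢ(x*) + ∑ λⱼ ∇gⱼ(x*) = 0` and complementary slackness. -/
theorem weak_pareto_kkt_necessary {n m k : ℕ}
    (f : Fin m → EuclideanSpace ℝ (Fin n) → ℝ)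
    (g : Fin k → EuclideanSpace ℝ (Fin n) → ℝ)
    (hfconv : ∀ i, ConvexOn ℝ Set.univ (f i))
    (hfdiff : ∀ i, Differentiable ℝ (f i))
    (hgconv : ∀ j, ConvexOn ℝ Set.univ (g j))
    (hgdiff : ∀ j, Differentiable ℝ (g j))
    (X : Set (EuclideanSpace ℝ (Fin n)))
    (hXdef : X = {x | ∀ j, g j x ≤ 0})
    (slater : ∃ xhat : EuclideanSpace ℝ (Fin n), ∀ j, g j xhat < 0)
    (xstar : EuclideanSpace ℝ (Fin n)) (hxstar : xstar ∈ X)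
    (hweak : ¬ ∃ x ∈ X, ∀ i, f i x < f i xstar) :
    ∃ (τ : Fin m → ℝ) (lam : Fin k → ℝ),
      (∀ i, 0 ≤ τ i) ∧ τ ≠ 0 ∧ (∀ j, 0 ≤ lam j) ∧
      (∑ i, τ i • gradient (f i) xstar) + (∑ j, lam j • gradient (g j) xstar) = 0 ∧
      (∀ j, lam j * g j xstar = 0) := by
  classical
  have hxstar' : ∀ j, g j xstar ≤ 0 := by rw [hXdef] at hxstar; exact hxstar
  -- The set to be separated from the origin
  set C : Set ((Fin m → ℝ) × (Fin k → ℝ)) :=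
    {p | ∃ x : EuclideanSpace ℝ (Fin n), (∀ i, f i x - f i xstar < p.1 i) ∧ (∀ j, g j x < p.2 j)} with hC
  have hCopen : IsOpen C := by
    have hrw : C = ⋃ x : EuclideanSpace ℝ (Fin n),
        ((⋂ i, {p : (Fin m → ℝ) × (Fin k → ℝ) | f i x - f i xstar < p.1 i}) ∩
          ⋂ j, {p : (Fin m → ℝ) × (Fin k → ℝ) | g j x < p.2 j}) := by
      ext p
      simp [hC, Set.mem_iUnion, Set.mem_iInter]
    rw [hrw]
    refine isOpen_iUnion fun x => IsOpen.inter ?_ ?_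
    · exact isOpen_iInter_of_finite fun i =>
        isOpen_lt continuous_const ((continuous_apply i).comp continuous_fst)
    · exact isOpen_iInter_of_finite fun j =>
        isOpen_lt continuous_const ((continuous_apply j).comp continuous_snd)
  have hCconv : Convex ℝ C := by
    rintro p ⟨x, hx1, hx2⟩ q ⟨y, hy1, hy2⟩ a b ha hb hab
    refine ⟨a • x + b • y, fun i => ?_, fun j => ?_⟩
    · have hcomb := (hfconv i).2 (Set.mem_univ x) (Set.mem_univ y) ha hb hab
      have h := combo_lt_aux ha hb hab (hx1 i) (hy1 i)
      have e : a * (f i x - f i xstar) + b * (f i y - f i xstar)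
          = a * f i x + b * f i y - f i xstar := by linear_combination (-(f i xstar)) * hab
      have hco : (a • p + b • q).1 i = a * p.1 i + b * q.1 i := rfl
      rw [hco]
      simp only [smul_eq_mul] at hcomb
      linarith
    · have hcomb := (hgconv j).2 (Set.mem_univ x) (Set.mem_univ y) ha hb hab
      have h := combo_lt_aux ha hb hab (hx2 j) (hy2 j)
      have hco : (a • p + b • q).2 j = a * p.2 j + b * q.2 j := rfl
      rw [hco]
      simp only [smul_eq_mul] at hcomb
      linarith
  have h0C : (0 : (Fin m → ℝ) × (Fin k → ℝ)) ∉ C := by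
    rintro ⟨x, hx1, hx2⟩
    refine hweak ⟨x, ?_, fun i => ?_⟩
    · rw [hXdef]
      intro j
      have h := hx2 j
      have h0 : ((0 : (Fin m → ℝ) × (Fin k → ℝ)).2) j = 0 := rfl
      rw [h0] at h
      exact h.le
    · have h := hx1 i
      have h0 : ((0 : (Fin m → ℝ) × (Fin k → ℝ)).1) i = 0 := rfl
      rw [h0] at h
      linarith
  obtain ⟨φ, hφ⟩ := geometric_hahn_banach_point_open hCconv hCopen h0C
  have hφpos : ∀ p ∈ C, 0 < φ p := by
    intro p hp
    have := hφ p hp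
    simpa using this
  -- multipliers
  set τ : Fin m → ℝ := fun i => φ (Pi.single i 1, 0) with hτ
  set lam : Fin k → ℝ := fun j => φ (0, Pi.single j 1) with hlam
  -- linearity formula for φ
  have hφeval : ∀ p : (Fin m → ℝ) × (Fin k → ℝ),
      φ p = (∑ i, p.1 i * τ i) + ∑ j, p.2 j * lam j := by
    intro p
    have hp : p = (∑ i, p.1 i • ((Pi.single i 1 : Fin m → ℝ), (0 : Fin k → ℝ)))
        + ∑ j, p.2 j • ((0 : Fin m → ℝ), (Pi.single j 1 : Fin k → ℝ)) := by
      refine Prod.ext ?_ ?_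
      · simp only [Prod.fst_add, Prod.fst_sum, Prod.smul_fst, smul_zero]
        rw [Finset.sum_const_zero, add_zero, sum_single_smul_aux]
      · simp only [Prod.snd_add, Prod.snd_sum, Prod.smul_snd, smul_zero]
        rw [Finset.sum_const_zero, zero_add, sum_single_smul_aux]
    have hsingle : ∀ (c : ℝ) (q : (Fin m → ℝ) × (Fin k → ℝ)), φ (c • q) = c * φ q :=
      fun c q => by rw [map_smul, smul_eq_mul]
    conv_lhs => rw [hp]
    rw [map_add, map_sum, map_sum]
    congr 1
    · exact Finset.sum_congr rfl fun i _ => hsingle _ _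
    · exact Finset.sum_congr rfl fun j _ => hsingle _ _
  -- a base point in C
  have hbase : ((fun _ => 1, fun _ => 1) : (Fin m → ℝ) × (Fin k → ℝ)) ∈ C :=
    ⟨xstar, fun i => by simp, fun j => by have := hxstar' j; simp; linarith⟩
  -- C is closed under adding coordinatewise-nonnegative vectors
  have hCmono : ∀ p ∈ C, ∀ q : (Fin m → ℝ) × (Fin k → ℝ),
      (∀ i, 0 ≤ q.1 i) → (∀ j, 0 ≤ q.2 j) → p + q ∈ C := by
    rintro p ⟨x, h1, h2⟩ q hq1 hq2
    exact ⟨x, fun i => (h1 i).trans_le (le_add_of_nonneg_right (hq1 i)),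
      fun j => (h2 j).trans_le (le_add_of_nonneg_right (hq2 j))⟩
  -- nonnegativity of multipliers
  have hτnn : ∀ i, 0 ≤ τ i := by
    intro i
    by_contra hneg
    push_neg at hneg
    have hb0 : 0 < φ ((fun _ => 1, fun _ => 1) : (Fin m → ℝ) × (Fin k → ℝ)) :=
      hφpos _ hbase
    set B := φ ((fun _ => 1, fun _ => 1) : (Fin m → ℝ) × (Fin k → ℝ))
    set t : ℝ := (B + 1) / (-τ i) with ht
    have htpos : 0 < t := div_pos (by linarith) (by linarith)
    have hmem : ((fun _ => 1, fun _ => 1) : (Fin m → ℝ) × (Fin k → ℝ))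
        + t • ((Pi.single i 1 : Fin m → ℝ), (0 : Fin k → ℝ)) ∈ C := by
      refine hCmono _ hbase _ (fun i' => ?_) (fun j => by simp)
      have : (0:ℝ) ≤ (Pi.single i 1 : Fin m → ℝ) i' := by
        rcases eq_or_ne i' i with rfl | hne
        · simp
        · simp [Pi.single_apply, hne]
      simpa using mul_nonneg htpos.le this
    have := hφpos _ hmem
    rw [map_add, map_smul] at this
    have hφe : φ ((Pi.single i 1 : Fin m → ℝ), (0 : Fin k → ℝ)) = τ i := rfl
    rw [hφe] at this
    have hne' : -τ i ≠ 0 := neg_ne_zero.2 (ne_of_lt hneg)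
    have hte : t * τ i = -(B + 1) := by
      rw [ht, div_mul_eq_mul_div, div_eq_iff hne']; ring
    simp only [smul_eq_mul] at this
    rw [hte] at this
    simp only [B] at this ⊢
    linarith
  have hlamnn : ∀ j, 0 ≤ lam j := by
    intro j
    by_contra hneg
    push_neg at hneg
    have hb0 : 0 < φ ((fun _ => 1, fun _ => 1) : (Fin m → ℝ) × (Fin k → ℝ)) :=
      hφpos _ hbase
    set B := φ ((fun _ => 1, fun _ => 1) : (Fin m → ℝ) × (Fin k → ℝ))
    set t : ℝ := (B + 1) / (-lam j) with ht
    have htpos : 0 < t := div_pos (by linarith) (by linarith)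
    have hmem : ((fun _ => 1, fun _ => 1) : (Fin m → ℝ) × (Fin k → ℝ))
        + t • ((0 : Fin m → ℝ), (Pi.single j 1 : Fin k → ℝ)) ∈ C := by
      refine hCmono _ hbase _ (fun i' => by simp) (fun j' => ?_)
      have : (0:ℝ) ≤ (Pi.single j 1 : Fin k → ℝ) j' := by
        rcases eq_or_ne j' j with rfl | hne
        · simp
        · simp [Pi.single_apply, hne]
      simpa using mul_nonneg htpos.le this
    have := hφpos _ hmem
    rw [map_add, map_smul] at this
    have hφe : φ ((0 : Fin m → ℝ), (Pi.single j 1 : Fin k → ℝ)) = lam j := rfl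
    rw [hφe] at this
    have hne' : -lam j ≠ 0 := neg_ne_zero.2 (ne_of_lt hneg)
    have hte : t * lam j = -(B + 1) := by
      rw [ht, div_mul_eq_mul_div, div_eq_iff hne']; ring
    simp only [smul_eq_mul] at this
    rw [hte] at this
    simp only [B] at this ⊢
    linarith
  -- key inequality
  have hkey : ∀ x : EuclideanSpace ℝ (Fin n), 0 ≤ (∑ i, (f i x - f i xstar) * τ i) + ∑ j, g j x * lam j := by
    intro x
    set S := (∑ i, (f i x - f i xstar) * τ i) + ∑ j, g j x * lam j with hS
    set K := (∑ i, τ i) + ∑ j, lam j with hK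
    have hKnn : 0 ≤ K :=
      add_nonneg (Finset.sum_nonneg fun i _ => hτnn i) (Finset.sum_nonneg fun j _ => hlamnn j)
    have hεpos : ∀ ε : ℝ, 0 < ε → 0 < S + ε * K := by
      intro ε hε
      have hmem : ((fun i => f i x - f i xstar + ε, fun j => g j x + ε)
          : (Fin m → ℝ) × (Fin k → ℝ)) ∈ C :=
        ⟨x, fun i => by simpa using hε, fun j => by simpa using hε⟩
      have h := hφpos _ hmem
      rw [hφeval] at h
      have e1 : (∑ i, (f i x - f i xstar + ε) * τ i)
          = (∑ i, (f i x - f i xstar) * τ i) + ε * ∑ i, τ i := by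
        rw [Finset.mul_sum, ← Finset.sum_add_distrib]
        exact Finset.sum_congr rfl fun i _ => by ring
      have e2 : (∑ j, (g j x + ε) * lam j)
          = (∑ j, g j x * lam j) + ε * ∑ j, lam j := by
        rw [Finset.mul_sum, ← Finset.sum_add_distrib]
        exact Finset.sum_congr rfl fun j _ => by ring
      simp only at h
      rw [e1, e2] at h
      rw [hS, hK]
      ring_nf
      ring_nf at h
      linarith
    by_contra hneg
    push_neg at hneg
    have hden : (0:ℝ) < K + 1 := by linarith
    have hε : (0:ℝ) < -S / (K + 1) := div_pos (by linarith) hden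
    have h := hεpos _ hε
    have : S + (-S / (K + 1)) * K = S / (K + 1) := by field_simp; ring
    rw [this] at h
    have : S / (K + 1) < 0 := div_neg_of_neg_of_pos hneg hden
    linarith
  -- complementary slackness
  have hterm : ∀ j, g j xstar * lam j ≤ 0 :=
    fun j => mul_nonpos_of_nonpos_of_nonneg (hxstar' j) (hlamnn j)
  have hsum0 : ∑ j, g j xstar * lam j = 0 := by
    have hge : 0 ≤ ∑ j, g j xstar * lam j := by
      have := hkey xstar
      simpa using this
    have hle : ∑ j, g j xstar * lam j ≤ 0 := Finset.sum_nonpos fun j _ => hterm j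
    linarith
  have hCS : ∀ j, lam j * g j xstar = 0 := by
    intro j
    have := (Finset.sum_eq_zero_iff_of_nonpos (fun j _ => hterm j)).1 hsum0 j (Finset.mem_univ j)
    linarith [this, mul_comm (lam j) (g j xstar)]
  -- x* minimizes the Lagrangian
  set L : EuclideanSpace ℝ (Fin n) → ℝ := fun x => (∑ i, τ i * f i x) + ∑ j, lam j * g j x with hL
  have hmin : ∀ x, L xstar ≤ L x := by
    intro x
    have h := hkey x
    have e1 : ∑ i, (f i x - f i xstar) * τ i
        = (∑ i, τ i * f i x) - ∑ i, τ i * f i xstar := by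
      rw [← Finset.sum_sub_distrib]
      exact Finset.sum_congr rfl fun i _ => by ring
    have e2 : ∑ j, g j x * lam j = ∑ j, lam j * g j x :=
      Finset.sum_congr rfl fun j _ => mul_comm _ _
    have e3 : ∑ j, lam j * g j xstar = 0 :=
      Finset.sum_eq_zero fun j _ => hCS j
    rw [e1, e2] at h
    simp only [hL, e3, add_zero]
    linarith
  -- differentiate
  have h1 : HasFDerivAt (fun x => ∑ i, τ i * f i x)
      (∑ i, τ i • fderiv ℝ (f i) xstar) xstar :=
    HasFDerivAt.fun_sum fun i _ => ((hfdiff i xstar).hasFDerivAt.const_mul (τ i))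
  have h2 : HasFDerivAt (fun x => ∑ j, lam j * g j x)
      (∑ j, lam j • fderiv ℝ (g j) xstar) xstar :=
    HasFDerivAt.fun_sum fun j _ => ((hgdiff j xstar).hasFDerivAt.const_mul (lam j))
  have hLD : HasFDerivAt L
      ((∑ i, τ i • fderiv ℝ (f i) xstar) + ∑ j, lam j • fderiv ℝ (g j) xstar) xstar :=
    h1.add h2
  have hlocmin : IsLocalMin L xstar := Filter.Eventually.of_forall hmin
  have hD0 : (∑ i, τ i • fderiv ℝ (f i) xstar) + ∑ j, lam j • fderiv ℝ (g j) xstar = 0 := by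
    rw [← hLD.fderiv]
    exact hlocmin.fderiv_eq_zero
  -- translate to gradients
  have hgrad : (∑ i, τ i • gradient (f i) xstar) + (∑ j, lam j • gradient (g j) xstar) = 0 := by
    have : (∑ i, τ i • gradient (f i) xstar) + (∑ j, lam j • gradient (g j) xstar)
        = (InnerProductSpace.toDual ℝ (EuclideanSpace ℝ (Fin n))).symm
            ((∑ i, τ i • fderiv ℝ (f i) xstar) + ∑ j, lam j • fderiv ℝ (g j) xstar) := by
      simp only [gradient, map_add, map_sum, map_smul]
    rw [this, hD0, map_zero]
  -- τ ≠ 0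
  have hτne : τ ≠ 0 := by
    intro h0
    obtain ⟨xhat, hxhat⟩ := slater
    have hmem : ((fun i => f i xhat - f i xstar + 1, fun j => g j xhat / 2)
        : (Fin m → ℝ) × (Fin k → ℝ)) ∈ C :=
      ⟨xhat, fun i => by simp, fun j => by have := hxhat j; linarith⟩
    have h := hφpos _ hmem
    rw [hφeval] at h
    have e1 : (∑ i, (f i xhat - f i xstar + 1) * τ i) = 0 := by
      apply Finset.sum_eq_zero
      intro i _
      have : τ i = 0 := congrFun h0 i
      rw [this, mul_zero]
    have e2 : (∑ j, (g j xhat / 2) * lam j) ≤ 0 :=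
      Finset.sum_nonpos fun j _ =>
        mul_nonpos_of_nonpos_of_nonneg (by have := hxhat j; linarith) (hlamnn j)
    simp only at h
    rw [e1] at h
    simp only [zero_add] at h
    linarith
  exact ⟨τ, lam, hτnn, hτne, hlamnn, hgrad, hCS⟩
end

section
/- Let f₁,…,f_m : ℝⁿ → ℝ and g₁,…,g_k : ℝⁿ → ℝ be convex differentiable functions and let X = {x ∈ ℝⁿ : g_j(x) ≤ 0 for all j = 1,…,k}. Let x₀ ∈ X be a Pareto minimizer of f = (f₁,…,f_m) on X, set X̂(x₀) = {x ∈ X : fᵢ(x) ≤ fᵢ(x₀) for all i}, and suppose the strong Abadie type regularity condition holds at x₀, i.e., the tangent cone of X̂(x₀) at x₀ equals V(x₀) = {h ∈ ℝⁿ : ⟨∇fᵢ(x₀), h⟩ ≤ 0 for all i = 1,…,m and ⟨∇g_r(x₀), h⟩ ≤ 0 for all r with g_r(x₀) = 0}. Then there exist real numbers λ₁* > 0, …, λ_m* > 0 and nonnegative real numbers μ₁*, …, μ_k* such that λ₁*∇f₁(x₀) + … + λ_m*∇f_m(x₀) + μ₁*∇g₁(x₀) + … + μ_k*∇g_k(x₀)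 = 0 and μ_j* g_j(x₀) = 0 for all j = 1,…,k. -/
open RealInnerProductSpace

/-- The tangent cone of `S` at `x₀`: directions `d` for which there are sequences `t_k ≥ 0`
and `y_k ∈ S` with `y_k → x₀` and `t_k • (y_k − x₀) → d`. -/
def tangentConeOf {n : ℕ} (S : Set (EuclideanSpace ℝ (Fin n)))
    (x₀ : EuclideanSpace ℝ (Fin n)) : Set (EuclideanSpace ℝ (Fin n)) :=
  {d | ∃ (t : ℕ → ℝ) (y : ℕ → EuclideanSpace ℝ (Fin n)),
        (∀ j, 0 ≤ t j) ∧ (∀ j, y j ∈ S) ∧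
        Filter.Tendsto y Filter.atTop (nhds x₀) ∧
        Filter.Tendsto (fun j => t j • (y j - x₀)) Filter.atTop (nhds d)}

section Aux

variable {E : Type*} [NormedAddCommGroup E] [InnerProductSpace ℝ E] [FiniteDimensional ℝ E]
variable {ι : Type*} [Fintype ι]

/-- Conic Carathéodory: any nonnegative combination can be rewritten as a nonnegative
combination over a linearly independent subfamily. -/
theorem cone_caratheodory (v : ι → E) (s : Finset ι) :
    ∀ (α : ι → ℝ), (∀ i, 0 ≤ α i) →
    ∃ t : Finset ι, t ⊆ s ∧ ∃ β : ι → ℝ, (∀ i, 0 ≤ β i) ∧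
      (∑ i ∈ t, β i • v i = ∑ i ∈ s, α i • v i) ∧
      LinearIndependent ℝ (fun i : t => v (i : ι)) := by
  classical
  induction s using Finset.strongInduction with
  | _ s ih =>
    intro α hα
    by_cases hli : LinearIndependent ℝ (fun i : s => v (i : ι))
    · exact ⟨s, Finset.Subset.refl s, α, hα, rfl, hli⟩
    · obtain ⟨g, hg0, i₁, hi₁⟩ := Fintype.not_linearIndependent_iff.mp hli
      set γ0 : ι → ℝ := fun i => if h : i ∈ s then g ⟨i, h⟩ else 0 with hγ0def
      have hγ0sum : ∑ i ∈ s, γ0 i • v i = 0 := by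
        rw [← Finset.sum_coe_sort s (fun i => γ0 i • v i)]
        rw [← hg0]
        refine Finset.sum_congr rfl fun i _ => ?_
        simp [hγ0def]
      have hγ0z : ∀ i ∉ s, γ0 i = 0 := fun i hi => by simp [hγ0def, hi]
      have hγ0i₁ : γ0 (i₁ : ι) = g i₁ := by simp [hγ0def]
      have key : ∀ γ : ι → ℝ, (∑ i ∈ s, γ i • v i = 0) → (∀ i ∉ s, γ i = 0) →
          (∃ i ∈ s, 0 < γ i) →
          ∃ t : Finset ι, t ⊆ s ∧ ∃ β : ι → ℝ, (∀ i, 0 ≤ β i) ∧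
            (∑ i ∈ t, β i • v i = ∑ i ∈ s, α i • v i) ∧
            LinearIndependent ℝ (fun i : t => v (i : ι)) := by
        intro γ hγsum hγz hγpos
        obtain ⟨i₂, hi₂s, hi₂pos⟩ := hγpos
        have hTne : (s.filter (fun i => 0 < γ i)).Nonempty :=
          ⟨i₂, Finset.mem_filter.mpr ⟨hi₂s, hi₂pos⟩⟩
        obtain ⟨i₀, hi₀T, hmin⟩ :=
          Finset.exists_min_image (s.filter (fun i => 0 < γ i)) (fun i => α i / γ i) hTne
        have hi₀s : i₀ ∈ s := (Finset.mem_filter.mp hi₀T).1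
        have hγi₀ : 0 < γ i₀ := (Finset.mem_filter.mp hi₀T).2
        set c : ℝ := α i₀ / γ i₀ with hcdef
        have hc : 0 ≤ c := div_nonneg (hα i₀) hγi₀.le
        set β : ι → ℝ := fun i => α i - c * γ i with hβdef
        have hβ : ∀ i, 0 ≤ β i := by
          intro i
          by_cases his : i ∈ s
          · by_cases hpos : 0 < γ i
            · have h1 : c ≤ α i / γ i := hmin i (Finset.mem_filter.mpr ⟨his, hpos⟩)
              have h2 : c * γ i ≤ α i := (le_div_iff₀ hpos).mp h1
              simp only [hβdef]; linarith
            · have h1 : γ i ≤ 0 := not_lt.mp hpos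
              have := hα i
              simp only [hβdef]
              nlinarith
          · simp [hβdef, hγz i his, hα i]
        have hβi₀ : β i₀ = 0 := by
          simp only [hβdef, hcdef]
          rw [div_mul_cancel₀ _ (ne_of_gt hγi₀)]
          ring
        have hsum2 : ∑ i ∈ s, β i • v i = ∑ i ∈ s, α i • v i := by
          simp only [hβdef, sub_smul, mul_smul, Finset.sum_sub_distrib]
          rw [← Finset.smul_sum, hγsum, smul_zero, sub_zero]
        have herase : ∑ i ∈ s.erase i₀, β i • v i = ∑ i ∈ s, β i • v i :=
          Finset.sum_erase _ (by rw [hβi₀, zero_smul])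
        obtain ⟨t, hts, δ, hδ, hδsum, hli'⟩ :=
          ih (s.erase i₀) (Finset.erase_ssubset hi₀s) β hβ
        exact ⟨t, hts.trans (Finset.erase_subset _ _), δ, hδ,
          by rw [hδsum, herase, hsum2], hli'⟩
      by_cases hpos : ∃ i ∈ s, 0 < γ0 i
      · exact key γ0 hγ0sum hγ0z hpos
      · push_neg at hpos
        refine key (fun i => -γ0 i) ?_ (fun i hi => by simp [hγ0z i hi]) ?_
        · simp only [neg_smul, Finset.sum_neg_distrib, hγ0sum, neg_zero]
        · refine ⟨(i₁ : ι), i₁.2, ?_⟩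
          have h1 : γ0 (i₁ : ι) ≠ 0 := by rw [hγ0i₁]; exact hi₁
          have h2 : γ0 (i₁ : ι) ≤ 0 := hpos (i₁ : ι) i₁.2
          have : γ0 (i₁ : ι) < 0 := lt_of_le_of_ne h2 h1
          exact neg_pos.mpr this

/-- A finitely generated cone is closed. -/
theorem isClosed_coneGen (v : ι → E) :
    IsClosed {x : E | ∃ α : ι → ℝ, (∀ i, 0 ≤ α i) ∧ x = ∑ i, α i • v i} := by
  classical
  have heq : {x : E | ∃ α : ι → ℝ, (∀ i, 0 ≤ α i) ∧ x = ∑ i, α i • v i} =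
      ⋃ t ∈ {t : Finset ι | LinearIndependent ℝ (fun i : t => v (i : ι))},
        (fun β : t → ℝ => ∑ i, β i • v (i : ι)) '' {β | ∀ i, 0 ≤ β i} := by
    ext x
    simp only [Set.mem_setOf_eq, Set.mem_iUnion, Set.mem_image, exists_prop]
    constructor
    · rintro ⟨α, hα, rfl⟩
      obtain ⟨t, -, β, hβ, hsum, hli⟩ := cone_caratheodory v Finset.univ α hα
      refine ⟨t, hli, fun i => β i, fun i => hβ i, ?_⟩
      rw [Finset.sum_coe_sort t (fun i => β i • v i), hsum]
    · rintro ⟨t, hli, β, hβ, rfl⟩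
      refine ⟨fun i => if h : i ∈ t then β ⟨i, h⟩ else 0, ?_, ?_⟩
      · intro i
        by_cases h : i ∈ t
        · simpa [h] using hβ ⟨i, h⟩
        · simp [h]
      · rw [← Finset.sum_subset (Finset.subset_univ t)
          (fun i _ hit => by simp [hit])]
        rw [← Finset.sum_coe_sort t]
        exact Finset.sum_congr rfl fun i _ => by simp
  rw [heq]
  refine Set.Finite.isClosed_biUnion (Set.toFinite _) (fun t ht => ?_)
  let L : (t → ℝ) →ₗ[ℝ] E :=
    { toFun := fun β => ∑ i, β i • v (i : ι)
      map_add' := by intro x y; simp [add_smul, Finset.sum_add_distrib]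
      map_smul' := by intro c x; simp [Finset.smul_sum, smul_smul]
    }
  have hker : LinearMap.ker L = ⊥ := by
    rw [LinearMap.ker_eq_bot']
    intro β hβ
    exact funext (Fintype.linearIndependent_iff.mp ht β hβ)
  have hemb := LinearMap.isClosedEmbedding_of_injective hker
  have horth : IsClosed {β : t → ℝ | ∀ i, 0 ≤ β i} := by
    have : {β : t → ℝ | ∀ i, 0 ≤ β i} = ⋂ i, {β | 0 ≤ β i} := by
      ext; simp [Set.mem_iInter]
    rw [this]
    exact isClosed_iInter fun i => isClosed_le continuous_const (continuous_apply i)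
  exact hemb.isClosedMap _ horth

/-- Farkas' lemma. -/
theorem farkas_cone (v : ι → E) (c : E)
    (hc : ∀ h : E, (∀ i, ⟪v i, h⟫ ≤ 0) → ⟪c, h⟫ ≤ 0) :
    ∃ α : ι → ℝ, (∀ i, 0 ≤ α i) ∧ c = ∑ i, α i • v i := by
  classical
  by_contra hcon
  let K : ConvexCone ℝ E :=
    { carrier := {x : E | ∃ α : ι → ℝ, (∀ i, 0 ≤ α i) ∧ x = ∑ i, α i • v i}
      smul_mem' := by
        rintro r hr x ⟨α, hα, rfl⟩
        exact ⟨fun i => r * α i, fun i => mul_nonneg hr.le (hα i),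
          by simp [Finset.smul_sum, smul_smul]⟩
      add_mem' := by
        rintro x ⟨α, hα, rfl⟩ y ⟨α', hα', rfl⟩
        exact ⟨fun i => α i + α' i, fun i => add_nonneg (hα i) (hα' i),
          by simp [add_smul, Finset.sum_add_distrib]⟩ }
  have hcC : c ∉ K := fun ⟨α, hα, h⟩ => hcon ⟨α, hα, h⟩
  have hne : (K : Set E).Nonempty :=
    ⟨0, ⟨fun _ => 0, fun _ => le_refl 0, by simp⟩⟩
  have hcl : IsClosed (K : Set E) := isClosed_coneGen v
  obtain ⟨y, hy1, hy2⟩ :=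
    ProperCone.hyperplane_separation' (E := E) (x₀ := c)
      ⟨{ carrier := (K : Set E)
         add_mem' := fun ha hb => K.add_mem ha hb
         zero_mem' := ⟨fun _ => 0, fun _ => le_refl 0, by simp⟩
         smul_mem' := by
           rintro r x ⟨α, hα, rfl⟩
           exact ⟨fun i => (r : ℝ) * α i, fun i => mul_nonneg r.2 (hα i),
             by simp only [Finset.smul_sum, mul_smul]; rfl⟩ }, hcl⟩ hcC
  have hvy : ∀ i, ⟪v i, -y⟫ ≤ 0 := by
    intro i
    have hvi : v i ∈ K := by
      refine ⟨fun j => if j = i then 1 else 0, fun j => by positivity, ?_⟩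
      simp [ite_smul]
    have h0 := hy1 _ hvi
    rw [inner_neg_right]
    linarith
  have h1 := hc (-y) hvy
  rw [inner_neg_right] at h1
  linarith

end Aux

/-- If `φ` has gradient `a` at `x₀` and is constant (equal to `φ x₀`) on `S`, then `a` is
orthogonal to every tangent direction of `S` at `x₀`. -/
theorem inner_gradient_eq_zero_of_tangent {n : ℕ} {φ : EuclideanSpace ℝ (Fin n) → ℝ}
    {a x₀ : EuclideanSpace ℝ (Fin n)} (hφ : HasGradientAt φ a x₀)
    {S : Set (EuclideanSpace ℝ (Fin n))} (hS : ∀ y ∈ S, φ y = φ x₀)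
    {h : EuclideanSpace ℝ (Fin n)} (hh : h ∈ tangentConeOf S x₀) : ⟪a, h⟫ = 0 := by
  obtain ⟨t, y, ht, hyS, hyx, hu⟩ := hh
  have hlo : (fun x' => φ x' - φ x₀ - ⟪a, x' - x₀⟫) =o[nhds x₀] (fun x' => x' - x₀) :=
    hasGradientAt_iff_isLittleO.mp hφ
  have hlo2 : (fun j => φ (y j) - φ x₀ - ⟪a, y j - x₀⟫) =o[Filter.atTop]
      (fun j => y j - x₀) := hlo.comp_tendsto hyx
  have hlo3 : (fun j => ⟪a, y j - x₀⟫) =o[Filter.atTop] (fun j => y j - x₀) := by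
    have := hlo2.neg_left
    have heq : (fun j => -(φ (y j) - φ x₀ - ⟪a, y j - x₀⟫)) =
        (fun j => ⟪a, y j - x₀⟫) := by
      funext j
      rw [hS (y j) (hyS j)]
      ring
    rwa [heq] at this
  have hlo4 : (fun j => t j * ⟪a, y j - x₀⟫) =o[Filter.atTop]
      (fun j => t j * ‖y j - x₀‖) :=
    (Asymptotics.isBigO_refl (fun j => t j) Filter.atTop).mul_isLittleO hlo3.norm_right
  have hnorm : (fun j => t j * ‖y j - x₀‖) = fun j => ‖t j • (y j - x₀)‖ := by
    funext j
    rw [norm_smul, Real.norm_eq_abs, abs_of_nonneg (ht j)]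
  have hO1 : (fun j => t j * ‖y j - x₀‖) =O[Filter.atTop] (fun _ => (1 : ℝ)) := by
    rw [hnorm]
    exact hu.norm.isBigO_one ℝ
  have hlim0 : Filter.Tendsto (fun j => t j * ⟪a, y j - x₀⟫) Filter.atTop (nhds 0) :=
    Asymptotics.isLittleO_one_iff ℝ |>.mp (hlo4.trans_isBigO hO1)
  have hlim1 : Filter.Tendsto (fun j => t j * ⟪a, y j - x₀⟫) Filter.atTop (nhds ⟪a, h⟫) := by
    have := Filter.Tendsto.inner (𝕜 := ℝ) (tendsto_const_nhds (x := a)) hu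
    have heq : (fun j => ⟪a, t j • (y j - x₀)⟫) = fun j => t j * ⟪a, y j - x₀⟫ := by
      funext j
      rw [real_inner_smul_right]
    rwa [heq] at this
  exact (tendsto_nhds_unique hlim1 hlim0)

/-- Strong KKT conditions at a Pareto minimizer under the strong Abadie type
regularity condition: all objective multipliers can be taken strictly positive. -/
theorem pareto_strong_kkt_under_strong_abadie {n m k : ℕ}
    (f : Fin m → EuclideanSpace ℝ (Fin n) → ℝ)
    (g : Fin k → EuclideanSpace ℝ (Fin n) → ℝ)
    (hfconv : ∀ i, ConvexOn ℝ Set.univ (f i))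
    (hfdiff : ∀ i, Differentiable ℝ (f i))
    (hgconv : ∀ j, ConvexOn ℝ Set.univ (g j))
    (hgdiff : ∀ j, Differentiable ℝ (g j))
    (X : Set (EuclideanSpace ℝ (Fin n)))
    (hXdef : X = {x | ∀ j, g j x ≤ 0})
    (x₀ : EuclideanSpace ℝ (Fin n)) (hx₀ : x₀ ∈ X)
    (hpareto : ¬ ∃ x ∈ X, (∀ i, f i x ≤ f i x₀) ∧ (∃ r, f r x < f r x₀))
    (habadie : tangentConeOf {x ∈ X | ∀ i, f i x ≤ f i x₀} x₀ =
      {h | (∀ i, ⟪gradient (f i) x₀, h⟫ ≤ 0) ∧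
           (∀ r, g r x₀ = 0 → ⟪gradient (g r) x₀, h⟫ ≤ 0)}) :
    ∃ (lam : Fin m → ℝ) (μ : Fin k → ℝ),
      (∀ i, 0 < lam i) ∧ (∀ j, 0 ≤ μ j) ∧
      (∑ i, lam i • gradient (f i) x₀) + (∑ j, μ j • gradient (g j) x₀) = 0 ∧
      (∀ j, μ j * g j x₀ = 0) := by
  classical
  set a : Fin m → EuclideanSpace ℝ (Fin n) := fun i => gradient (f i) x₀ with ha
  set b : Fin k → EuclideanSpace ℝ (Fin n) := fun j => gradient (g j) x₀ with hb
  -- On the restricted feasible set, all objectives are constant (by Pareto optimality).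
  have hXhat : ∀ y ∈ {x ∈ X | ∀ i, f i x ≤ f i x₀}, ∀ i, f i y = f i x₀ := by
    rintro y ⟨hyX, hyle⟩ i
    by_contra hne
    exact hpareto ⟨y, hyX, hyle, i, lt_of_le_of_ne (hyle i) hne⟩
  -- Gradients of objectives are orthogonal to all of V(x₀).
  have hV : ∀ h, (∀ i, ⟪a i, h⟫ ≤ 0) →
      (∀ r, g r x₀ = 0 → ⟪b r, h⟫ ≤ 0) → ∀ i, ⟪a i, h⟫ = 0 := by
    intro h h1 h2 i
    have hmem : h ∈ tangentConeOf {x ∈ X | ∀ i, f i x ≤ f i x₀} x₀ := by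
      rw [habadie]; exact ⟨h1, h2⟩
    exact inner_gradient_eq_zero_of_tangent ((hfdiff i x₀).hasGradientAt)
      (fun y hy => hXhat y hy i) hmem
  -- Farkas setup.
  set v : (Fin m ⊕ Fin k) → EuclideanSpace ℝ (Fin n) :=
    Sum.elim a (fun j => if g j x₀ = 0 then b j else 0) with hv
  have hfar : ∀ h, (∀ ii, ⟪v ii, h⟫ ≤ 0) → ⟪-∑ i, a i, h⟫ ≤ 0 := by
    intro h hall
    have h1 : ∀ i, ⟪a i, h⟫ ≤ 0 := fun i => hall (Sum.inl i)
    have h2 : ∀ r, g r x₀ = 0 → ⟪b r, h⟫ ≤ 0 := by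
      intro r hr
      have := hall (Sum.inr r)
      simpa [hv, hr] using this
    have h3 := hV h h1 h2
    have : ⟪-∑ i, a i, h⟫ = 0 := by
      rw [inner_neg_left, sum_inner]
      simp [h3]
    exact le_of_eq this
  obtain ⟨α, hα, hsum⟩ := farkas_cone v (-∑ i, a i) hfar
  refine ⟨fun i => 1 + α (Sum.inl i),
    fun j => if g j x₀ = 0 then α (Sum.inr j) else 0,
    fun i => by show (0:ℝ) < 1 + α (Sum.inl i); have := hα (Sum.inl i); linarith,
    fun j => by by_cases hj : g j x₀ = 0 <;> simp [hj, hα (Sum.inr j)],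
    ?_, fun j => by by_cases hj : g j x₀ = 0 <;> simp [hj]⟩
  have hμv : ∀ j, (if g j x₀ = 0 then α (Sum.inr j) else 0) • b j
      = α (Sum.inr j) • v (Sum.inr j) := by
    intro j
    by_cases hj : g j x₀ = 0 <;> simp [hv, hj]
  have hsplit : ∑ ii, α ii • v ii =
      (∑ i, α (Sum.inl i) • a i) + ∑ j, α (Sum.inr j) • v (Sum.inr j) := by
    rw [Fintype.sum_sum_type]
    rfl
  calc (∑ i, (1 + α (Sum.inl i)) • a i)
        + ∑ j, (if g j x₀ = 0 then α (Sum.inr j) else 0) • b j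
      = ((∑ i, a i) + ∑ i, α (Sum.inl i) • a i)
        + ∑ j, α (Sum.inr j) • v (Sum.inr j) := by
        rw [Finset.sum_congr rfl (fun j _ => hμv j)]
        simp [add_smul, Finset.sum_add_distrib]
    _ = (∑ i, a i) + ∑ ii, α ii • v ii := by rw [hsplit, add_assoc]
    _ = 0 := by rw [← hsum]; simp
end

section
/- Let X ⊆ ℝⁿ be a nonempty compact convex set and let f₁,…,f_m : ℝⁿ → ℝ be convex functions. Let (x_k) be a sequence in X such that for every k, x_{k+1} minimizes f₁(x) + … + f_m(x) over the set X_k = {x ∈ X : fᵢ(x) ≤ fᵢ(x_k) for all i = 1,…,m}. Then every limit point x* of the sequence (x_k) is a Pareto minimizer of f = (f₁,…,f_m) on X. -/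
/-- Convergence of the Charnes–Cooper algorithm CC1: if each iterate
`x_{k+1}` minimizes `∑ i, f i x` over `X_k = {x ∈ X : fᵢ(x) ≤ fᵢ(x_k) ∀ i}`, then every limit
point of the sequence `(x_k)` is a Pareto minimizer of `f` on `X`. -/
theorem cc1_limit_points_are_pareto {n m : ℕ}
    (X : Set (EuclideanSpace ℝ (Fin n)))
    (hXne : X.Nonempty) (hXcomp : IsCompact X) (hXconv : Convex ℝ X)
    (f : Fin m → EuclideanSpace ℝ (Fin n) → ℝ)
    (hf : ∀ i, ConvexOn ℝ Set.univ (f i))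
    (x : ℕ → EuclideanSpace ℝ (Fin n))
    (hxX : ∀ k, x k ∈ X)
    (hstep : ∀ k, x (k + 1) ∈ {x' ∈ X | ∀ i, f i x' ≤ f i (x k)} ∧
      ∀ x' ∈ {x' ∈ X | ∀ i, f i x' ≤ f i (x k)}, ∑ i, f i (x (k + 1)) ≤ ∑ i, f i x')
    (xstar : EuclideanSpace ℝ (Fin n))
    (hlimpt : ∃ φ : ℕ → ℕ, StrictMono φ ∧
      Filter.Tendsto (fun j => x (φ j)) Filter.atTop (nhds xstar)) :
    xstar ∈ X ∧ ¬ ∃ x' ∈ X, (∀ i, f i x' ≤ f i xstar) ∧ (∃ r, f r x' < f r xstar) := by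
  obtain ⟨φ, hφ, htend⟩ := hlimpt
  have hxstarX : xstar ∈ X :=
    hXcomp.isClosed.mem_of_tendsto htend (Filter.Eventually.of_forall fun j => hxX (φ j))
  have hcont : ∀ i, Continuous (f i) := fun i =>
    continuousOn_univ.mp ((hf i).continuousOn isOpen_univ)
  have hanti : ∀ i, Antitone fun k => f i (x k) := fun i =>
    antitone_nat_of_succ_le fun k => (hstep k).1.2 i
  have hftend : ∀ i, Filter.Tendsto (fun j => f i (x (φ j))) Filter.atTop (nhds (f i xstar)) :=
    fun i => ((hcont i).tendsto xstar).comp htend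
  have hge : ∀ i k, f i xstar ≤ f i (x k) := by
    intro i k
    refine le_of_tendsto (hftend i) ?_
    filter_upwards [Filter.eventually_ge_atTop k] with j hj
    exact hanti i (hj.trans (hφ.le_apply))
  refine ⟨hxstarX, ?_⟩
  rintro ⟨x', hx'X, hle, r, hlt⟩
  have h1 : ∑ i, f i (x 1) ≤ ∑ i, f i x' :=
    (hstep 0).2 x' ⟨hx'X, fun i => (hle i).trans (hge i 0)⟩
  have h2 : ∑ i, f i x' < ∑ i, f i xstar :=
    Finset.sum_lt_sum (fun i _ => hle i) ⟨r, Finset.mem_univ r, hlt⟩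
  have h3 : ∑ i, f i xstar ≤ ∑ i, f i (x 1) :=
    Finset.sum_le_sum fun i _ => hge i 1
  linarith
end

section
/- Let a₁,…,a_p ∈ ℝⁿ and let V = {h ∈ ℝⁿ : ⟨aᵢ, h⟩ ≤ 0 for all i = 1,…,p}. Then the polar cone of V, namely V° = {v ∈ ℝⁿ : ⟨v, h⟩ ≤ 0 for all h ∈ V}, equals the finitely generated cone {λ₁a₁ + … + λ_p a_p : λ₁ ≥ 0, …, λ_p ≥ 0}. -/
/-- Sum over support subset. -/
theorem sum_supported {H : Type*} [AddCommMonoid H] {p : ℕ} (f : Fin p → H)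
    (s : Finset (Fin p)) (hf : ∀ i ∉ s, f i = 0) :
    ∑ i, f i = ∑ i ∈ s.attach, f ↑i := by
  rw [Finset.sum_attach s f]
  exact (Finset.sum_subset s.subset_univ (fun i _ hi => hf i hi)).symm

/-- Conic Carathéodory. -/
theorem cara {H : Type*} [AddCommGroup H] [Module ℝ H] {p : ℕ} (a : Fin p → H)
    (s : Finset (Fin p)) :
    ∀ (lam : Fin p → ℝ), (∀ i, 0 ≤ lam i) → (∀ i ∉ s, lam i = 0) →
    ∃ t : Finset (Fin p), t ⊆ s ∧ LinearIndependent ℝ (fun i : t => a i) ∧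
      ∃ mu : Fin p → ℝ, (∀ i, 0 ≤ mu i) ∧ (∀ i ∉ t, mu i = 0) ∧
        ∑ i, mu i • a i = ∑ i, lam i • a i := by
  induction s using Finset.strongInduction with
  | _ s ih =>
    intro lam hlam hsupp
    by_cases hli : LinearIndependent ℝ (fun i : s => a i)
    · exact ⟨s, subset_rfl, hli, lam, hlam, hsupp, rfl⟩
    · obtain ⟨g, hg0, j, hj⟩ := Fintype.not_linearIndependent_iff.mp hli
      have key : ∃ c : Fin p → ℝ, (∀ i ∉ s, c i = 0) ∧ (∑ i, c i • a i = 0) ∧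
          ∃ i ∈ s, 0 < c i := by
        rcases lt_trichotomy (g j) 0 with h | h | h
        · refine ⟨fun i => if h : i ∈ s then -g ⟨i, h⟩ else 0, fun i hi => dif_neg hi, ?_, j, j.2, ?_⟩
          · rw [sum_supported (fun i => (if h : i ∈ s then -g ⟨i, h⟩ else 0) • a i) s
              (fun i hi => by rw [dif_neg hi, zero_smul])]
            have : ∑ i ∈ s.attach, (if h : (i : Fin p) ∈ s then -g ⟨i, h⟩ else 0) • a ↑i
                = -∑ i : s, g i • a ↑i := by
              rw [← Finset.sum_neg_distrib]
              apply Finset.sum_congr rfl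
              intro i _
              rw [dif_pos i.2, neg_smul]
            rw [this, hg0, neg_zero]
          · simp only [dif_pos j.2]
            simpa using h
        · exact absurd h hj
        · refine ⟨fun i => if h : i ∈ s then g ⟨i, h⟩ else 0, fun i hi => dif_neg hi, ?_, j, j.2, ?_⟩
          · rw [sum_supported (fun i => (if h : i ∈ s then g ⟨i, h⟩ else 0) • a i) s
              (fun i hi => by rw [dif_neg hi, zero_smul])]
            rw [← hg0]
            apply Finset.sum_congr rfl
            intro i _
            rw [dif_pos i.2]
          · simpa [dif_pos j.2] using h
      obtain ⟨c, hcs, hc0, i₁, hi₁s, hi₁pos⟩ := key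
      set T := s.filter (fun i => 0 < c i) with hT
      have hTne : T.Nonempty := ⟨i₁, Finset.mem_filter.mpr ⟨hi₁s, hi₁pos⟩⟩
      obtain ⟨i₀, hi₀T, hmin⟩ := T.exists_min_image (fun i => lam i / c i) hTne
      have hi₀s : i₀ ∈ s := (Finset.mem_filter.mp hi₀T).1
      have hci₀ : 0 < c i₀ := (Finset.mem_filter.mp hi₀T).2
      set r := lam i₀ / c i₀ with hr
      have hr0 : 0 ≤ r := div_nonneg (hlam i₀) hci₀.le
      set lam' := fun i => lam i - r * c i with hlam'
      have hlam'0 : ∀ i, 0 ≤ lam' i := by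
        intro i
        by_cases h : 0 < c i
        · have his : i ∈ s := by
            by_contra hns; rw [hcs i hns] at h; exact lt_irrefl 0 h
          have := hmin i (Finset.mem_filter.mpr ⟨his, h⟩)
          have : r * c i ≤ lam i := by
            rw [hr] at this ⊢
            exact (le_div_iff₀ h).mp this
          simpa [hlam'] using this
        · push_neg at h
          have : r * c i ≤ 0 := mul_nonpos_of_nonneg_of_nonpos hr0 h
          have := sub_nonneg.mpr (this.trans (hlam i))
          simpa [hlam'] using this
      have hsupp' : ∀ i ∉ s.erase i₀, lam' i = 0 := by
        intro i hi
        by_cases h : i = i₀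
        · subst h
          simp only [hlam', hr]
          rw [div_mul_cancel₀ _ hci₀.ne']
          ring
        · have hns : i ∉ s := fun hin => hi (Finset.mem_erase.mpr ⟨h, hin⟩)
          simp [hlam', hsupp i hns, hcs i hns]
      have hsum' : ∑ i, lam' i • a i = ∑ i, lam i • a i := by
        simp only [hlam', sub_smul, Finset.sum_sub_distrib, mul_smul]
        rw [← Finset.smul_sum, hc0, smul_zero, sub_zero]
      obtain ⟨t, hts, hli', mu, h1, h2, h3⟩ :=
        ih (s.erase i₀) (Finset.erase_ssubset hi₀s) lam' hlam'0 hsupp'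
      exact ⟨t, hts.trans (Finset.erase_subset _ _), hli', mu, h1, h2, h3.trans hsum'⟩


theorem closed_li {n : ℕ} {ι : Type*} [Fintype ι] (b : ι → EuclideanSpace ℝ (Fin n))
    (hb : LinearIndependent ℝ b) :
    IsClosed {v : EuclideanSpace ℝ (Fin n) |
      ∃ mu : ι → ℝ, (∀ i, 0 ≤ mu i) ∧ v = ∑ i, mu i • b i} := by
  let T : (ι → ℝ) →ₗ[ℝ] EuclideanSpace ℝ (Fin n) :=
    { toFun := fun mu => ∑ i, mu i • b i
      map_add' := fun x y => by simp [add_smul, Finset.sum_add_distrib]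
      map_smul' := fun c x => by simp [Finset.smul_sum, mul_smul]
      }
  have hker : LinearMap.ker T = ⊥ := by
    rw [LinearMap.ker_eq_bot']
    intro m hm
    funext i
    exact Fintype.linearIndependent_iff.mp hb m hm i
  have hT := LinearMap.isClosedEmbedding_of_injective hker
  have heq : {v : EuclideanSpace ℝ (Fin n) |
      ∃ mu : ι → ℝ, (∀ i, 0 ≤ mu i) ∧ v = ∑ i, mu i • b i}
      = T '' {mu | ∀ i, 0 ≤ mu i} := by
    ext v
    constructor
    · rintro ⟨mu, h1, h2⟩; exact ⟨mu, h1, h2.symm⟩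
    · rintro ⟨mu, h1, h2⟩; exact ⟨mu, h1, h2.symm⟩
  rw [heq]
  have hcl : IsClosed {mu : ι → ℝ | ∀ i, 0 ≤ mu i} := by
    have : {mu : ι → ℝ | ∀ i, 0 ≤ mu i} = ⋂ i, {mu : ι → ℝ | 0 ≤ mu i} := by
      ext mu; simp
    rw [this]
    exact isClosed_iInter fun i => isClosed_le continuous_const (continuous_apply i)
  exact hT.isClosedMap _ hcl


open RealInnerProductSpace

theorem cone_isClosed {n p : ℕ} (a : Fin p → EuclideanSpace ℝ (Fin n)) :
    IsClosed {v : EuclideanSpace ℝ (Fin n) |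
      ∃ lam : Fin p → ℝ, (∀ i, 0 ≤ lam i) ∧ v = ∑ i, lam i • a i} := by
  have heq : {v : EuclideanSpace ℝ (Fin n) |
        ∃ lam : Fin p → ℝ, (∀ i, 0 ≤ lam i) ∧ v = ∑ i, lam i • a i}
      = ⋃ t : {t : Finset (Fin p) // LinearIndependent ℝ (fun i : t => a i)},
        {v : EuclideanSpace ℝ (Fin n) |
          ∃ mu : ↥(t.1) → ℝ, (∀ i, 0 ≤ mu i) ∧ v = ∑ i, mu i • a ↑i} := by
    ext v
    simp only [Set.mem_setOf_eq, Set.mem_iUnion]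
    constructor
    · rintro ⟨lam, h1, h2⟩
      obtain ⟨t, -, hli, mu, hmu1, hmu2, hmu3⟩ :=
        cara a Finset.univ lam h1 (fun i hi => absurd (Finset.mem_univ i) hi)
      refine ⟨⟨t, hli⟩, fun i => mu ↑i, fun i => hmu1 ↑i, ?_⟩
      rw [h2, ← hmu3, sum_supported (fun i => mu i • a i) t
        (fun i hi => by rw [hmu2 i hi, zero_smul])]
      rfl
    · rintro ⟨⟨t, hli⟩, mu, h1, h2⟩
      refine ⟨fun i => if h : i ∈ t then mu ⟨i, h⟩ else 0,
        fun i => by by_cases h : i ∈ t <;> simp [h, h1], ?_⟩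
      rw [h2, sum_supported (fun i => (if h : i ∈ t then mu ⟨i, h⟩ else 0) • a i) t
        (fun i hi => by simp only []; rw [dif_neg hi, zero_smul])]
      rw [Finset.sum_attach t (fun i => (if h : i ∈ t then mu ⟨i, h⟩ else 0) • a i),
        ← Finset.sum_coe_sort t (fun i => (if h : i ∈ t then mu ⟨i, h⟩ else 0) • a i)]
      apply Finset.sum_congr rfl
      intro i _
      rw [dif_pos i.2]
  rw [heq]
  exact isClosed_iUnion_of_finite fun t => closed_li _ t.2

/-- Farkas. The polar cone of the polyhedral cone
`V = {h : ⟪aᵢ, h⟫ ≤ 0 ∀ i}` is the finitely generated cone `{∑ i, λᵢ • aᵢ : λᵢ ≥ 0}`. -/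
theorem polar_of_polyhedral_cone_eq_finitely_generated {n p : ℕ}
    (a : Fin p → EuclideanSpace ℝ (Fin n)) :
    {v : EuclideanSpace ℝ (Fin n) |
        ∀ h ∈ {h : EuclideanSpace ℝ (Fin n) | ∀ i, ⟪a i, h⟫ ≤ 0}, ⟪v, h⟫ ≤ 0} =
      {v : EuclideanSpace ℝ (Fin n) |
        ∃ lam : Fin p → ℝ, (∀ i, 0 ≤ lam i) ∧ v = ∑ i, lam i • a i} := by
  let Kc : ConvexCone ℝ (EuclideanSpace ℝ (Fin n)) :=
    { carrier := {v | ∃ lam : Fin p → ℝ, (∀ i, 0 ≤ lam i) ∧ v = ∑ i, lam i • a i}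
      smul_mem' := by
        rintro c hc v ⟨lam, h1, rfl⟩
        exact ⟨fun i => c * lam i, fun i => mul_nonneg hc.le (h1 i),
          by rw [Finset.smul_sum]; exact Finset.sum_congr rfl fun i _ => (mul_smul c (lam i) (a i)).symm⟩
      add_mem' := by
        rintro v ⟨lam, h1, rfl⟩ w ⟨mu, h2, rfl⟩
        exact ⟨fun i => lam i + mu i, fun i => add_nonneg (h1 i) (h2 i),
          by rw [← Finset.sum_add_distrib]; exact Finset.sum_congr rfl fun i _ => (add_smul _ _ _).symm⟩ }
  have hKne : (Kc : Set (EuclideanSpace ℝ (Fin n))).Nonempty :=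
    ⟨0, ⟨fun _ => 0, fun i => le_refl 0, by simp⟩⟩
  have hKcl : IsClosed (Kc : Set (EuclideanSpace ℝ (Fin n))) := cone_isClosed a
  ext v
  simp only [Set.mem_setOf_eq]
  constructor
  · intro hv
    by_contra hvK
    obtain ⟨y, hy1, hy2⟩ :=
      (show ∃ y, (∀ x ∈ Kc, 0 ≤ ⟪x, y⟫) ∧ ⟪y, v⟫ < 0 from by
        let C : ProperCone ℝ (EuclideanSpace ℝ (Fin n)) :=
          { carrier := Kc
            add_mem' := fun hx hy => Kc.add_mem hx hy
            zero_mem' := ⟨fun _ => 0, fun i => le_refl 0, by simp⟩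
            smul_mem' := by
              rintro c v ⟨lam, h1, rfl⟩
              refine ⟨fun i => c.1 * lam i, fun i => mul_nonneg c.2 (h1 i), ?_⟩
              show (c : ℝ) • (∑ i, lam i • a i) = ∑ i, (c.1 * lam i) • a i
              rw [Finset.smul_sum]
              exact Finset.sum_congr rfl fun i _ => (mul_smul (c : ℝ) (lam i) (a i)).symm
            isClosed' := hKcl }
        obtain ⟨y, hy1, hy2⟩ := C.hyperplane_separation' hvK
        exact ⟨y, hy1, by rw [real_inner_comm]; exact hy2⟩)
    have hai : ∀ i, ⟪a i, -y⟫ ≤ 0 := by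
      intro i
      have : a i ∈ Kc := ⟨fun j => if j = i then 1 else 0,
        fun j => by positivity, by simp [ite_smul]⟩
      have := hy1 _ this
      rw [inner_neg_right]
      linarith
    have := hv (-y) hai
    rw [inner_neg_right] at this
    rw [real_inner_comm] at hy2
    linarith
  · rintro ⟨lam, h1, rfl⟩ h hh
    rw [sum_inner]
    apply Finset.sum_nonpos
    intro i _
    rw [real_inner_smul_left]
    exact mul_nonpos_of_nonneg_of_nonpos (h1 i) (hh i)
end
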